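/- For any p ∈ {1,…,k} and q ∈ {1,…,λ}, the p-Statistic-of-q-Statistic mechanism is strategyproof: for every instance and every agent i, reporting a false position x_i' instead of the true position x_i never yields an output strictly closer to x_i. -/

import Mathlib

/-- The `j`-th smallest element (0-indexed) of a multiset of reals. -/
noncomputable def nthSmallest (s : Multiset ℝ) (j : ℕ) : ℝ :=
  (s.sort (· ≤ ·)).getD j 0

/-- The p-Statistic-of-q-Statistic mechanism: each district's representative is the
q-th smallest position in the district, and the output is the p-th smallest
representative. -/
noncomputable def statMech (k lam p q : ℕ) (x : Fin k → Fin lam → ℝ) : ℝ :=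
  nthSmallest
    (Finset.univ.val.map fun d => nthSmallest (Finset.univ.val.map (x d)) (q - 1))
    (p - 1)


lemma sortcons (v : ℝ) (s : Multiset ℝ) :
    (v ::ₘ s).sort (· ≤ ·) = (s.sort (· ≤ ·)).orderedInsert (· ≤ ·) v := by
  refine List.Perm.eq_of_pairwise' (Multiset.pairwise_sort _ _)
    ((Multiset.pairwise_sort s (· ≤ ·)).orderedInsert _ _) ?_
  have h := (List.perm_orderedInsert (· ≤ ·) v (s.sort (· ≤ ·)))
  refine (Multiset.coe_eq_coe.mp ?_).trans h.symm
  simp [Multiset.sort_eq, ← Multiset.cons_coe]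


local notation "oi" => List.orderedInsert (α := ℝ) (· ≤ ·)

lemma oi_cons (v a : ℝ) (l : List ℝ) :
    oi v (a :: l) = if v ≤ a then v :: a :: l else a :: oi v l := rfl

lemma head_le {a : ℝ} {l : List ℝ} (hl : (a :: l).Pairwise (· ≤ ·)) {j : ℕ}
    (hj : j < (a :: l).length) : a ≤ (a :: l).getD j 0 := by
  rw [List.getD_eq_getElem _ _ hj]
  have := hl.rel_get_of_le (a := ⟨0, by simp⟩) (b := ⟨j, hj⟩) (by simp)
  simpa using this

lemma lemC {a w : ℝ} {l : List ℝ} (hl : (a :: l).Pairwise (· ≤ ·)) (haw : a ≤ w) :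
    ∀ j : ℕ, (a :: l).getD j 0 ≤ (oi w l).getD j 0 := by
  induction l generalizing a with
  | nil => intro j; match j with
    | 0 => simpa using haw
    | (j+1) => simp
  | cons b l ih =>
    intro j
    rw [oi_cons]
    by_cases h : w ≤ b
    · rw [if_pos h]
      match j with
      | 0 => simpa using haw
      | (j+1) => simp
    · rw [if_neg h]
      match j with
      | 0 => simpa using (List.pairwise_cons.mp hl).1 b (by simp)
      | (j+1) =>
        simp only [List.getD_cons_succ]
        exact ih (List.pairwise_cons.mp hl).2 (le_of_not_ge h) j

lemma lemM {l : List ℝ} (hl : l.Pairwise (· ≤ ·)) {v w : ℝ} (hvw : v ≤ w) :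
    ∀ j : ℕ, (oi v l).getD j 0 ≤ (oi w l).getD j 0 := by
  induction l with
  | nil => intro j; match j with
    | 0 => simpa using hvw
    | (j+1) => simp
  | cons a l ih =>
    intro j
    rw [oi_cons, oi_cons]
    by_cases hv : v ≤ a <;> by_cases hw : w ≤ a
    · rw [if_pos hv, if_pos hw]
      match j with
      | 0 => simpa using hvw
      | (j+1) => simp
    · rw [if_pos hv, if_neg hw]
      match j with
      | 0 => simpa using hv
      | (j+1) =>
        simp only [List.getD_cons_succ]
        exact lemC hl (le_of_not_ge hw) j
    · exact absurd (hvw.trans hw) hv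
    · rw [if_neg hv, if_neg hw]
      match j with
      | 0 => simp
      | (j+1) =>
        simp only [List.getD_cons_succ]
        exact ih (List.pairwise_cons.mp hl).2 j

lemma lemE {l : List ℝ} (hl : l.Pairwise (· ≤ ·)) {t : ℝ} :
    ∀ j : ℕ, (oi t l).getD j 0 < t → (oi t l).getD j 0 = l.getD j 0 := by
  induction l with
  | nil => intro j h; match j with
    | 0 => simp at h
    | (j+1) => simp
  | cons a l ih =>
    intro j h
    rw [oi_cons] at *
    by_cases ht : t ≤ a
    · rw [if_pos ht] at h ⊢
      match j with
      | 0 => simp at h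
      | (j+1) =>
        simp only [List.getD_cons_succ] at h ⊢
        by_cases hj : j < (a :: l).length
        · exact absurd h (not_lt.mpr (ht.trans (head_le hl hj)))
        · have h1 : l.length + 1 ≤ j := by simpa using not_lt.mp hj
          rw [List.getD_eq_default _ _ (by simpa using h1),
            List.getD_eq_default _ _ (by omega)]
    · rw [if_neg ht] at h ⊢
      match j with
      | 0 => simp
      | (j+1) =>
        simp only [List.getD_cons_succ] at h ⊢
        exact ih (List.pairwise_cons.mp hl).2 j h

lemma lemE' {l : List ℝ} (hl : l.Pairwise (· ≤ ·)) {v : ℝ} :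
    ∀ j : ℕ, l.getD j 0 < v → j < l.length → (oi v l).getD j 0 = l.getD j 0 := by
  induction l with
  | nil => intro j _ hj; simp at hj
  | cons a l ih =>
    intro j h hj
    rw [oi_cons]
    by_cases hv : v ≤ a
    · exfalso
      match j with
      | 0 => simp at h; exact absurd (h.trans_le hv) (lt_irrefl a)
      | (j+1) =>
        simp only [List.getD_cons_succ] at h
        have : a ≤ l.getD j 0 := by
          have := head_le hl (j := j + 1) (by simpa using hj)
          simpa using this
        exact absurd ((this.trans_lt h).trans_le hv) (lt_irrefl a)
    · rw [if_neg hv]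
      match j with
      | 0 => simp
      | (j+1) =>
        simp only [List.getD_cons_succ] at h ⊢
        exact ih (List.pairwise_cons.mp hl).2 j h (by simpa using hj)

lemma lemH (t : ℝ) (l : List ℝ) : (oi t l).getD 0 0 ≤ t := by
  cases l with
  | nil => simp
  | cons a l =>
    rw [oi_cons]
    by_cases ht : t ≤ a
    · rw [if_pos ht]; simp
    · rw [if_neg ht]; simpa using le_of_not_ge ht

lemma lemF {l : List ℝ} (hl : l.Pairwise (· ≤ ·)) {t : ℝ} :
    ∀ j : ℕ, t < (oi t l).getD j 0 → (oi t l).getD j 0 = l.getD (j - 1) 0 := by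
  induction l with
  | nil => intro j h; match j with
    | 0 => simp at h
    | (j+1) => simp
  | cons a l ih =>
    intro j h
    match j with
    | 0 => exact absurd h (not_lt.mpr (lemH t (a :: l)))
    | (j+1) =>
      rw [oi_cons] at h ⊢
      by_cases ht : t ≤ a
      · rw [if_pos ht] at h ⊢
        simp
      · rw [if_neg ht] at h ⊢
        simp only [List.getD_cons_succ] at h ⊢
        match j with
        | 0 => exact absurd h (not_lt.mpr (lemH t l))
        | (j+1) =>
          have := ih (List.pairwise_cons.mp hl).2 (j+1) h
          simpa using this

lemma lemF' {l : List ℝ} (hl : l.Pairwise (· ≤ ·)) {v : ℝ} :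
    ∀ j : ℕ, v ≤ l.getD j 0 → j < l.length → (oi v l).getD (j + 1) 0 = l.getD j 0 := by
  induction l with
  | nil => intro j _ hj; simp at hj
  | cons a l ih =>
    intro j h hj
    rw [oi_cons]
    by_cases hv : v ≤ a
    · rw [if_pos hv]; simp
    · rw [if_neg hv]
      match j with
      | 0 => simp at h; exact absurd h hv
      | (j+1) =>
        simp only [List.getD_cons_succ] at h ⊢
        exact ih (List.pairwise_cons.mp hl).2 j h (by simpa using hj)

lemma lemG {l : List ℝ} (hl : l.Pairwise (· ≤ ·)) (t : ℝ) :
    t ≤ (oi t l).getD l.length 0 := by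
  induction l with
  | nil => simp
  | cons a l ih =>
    rw [oi_cons]
    by_cases ht : t ≤ a
    · rw [if_pos ht]
      simp only [List.length_cons, List.getD_cons_succ]
      exact ht.trans (head_le hl (by simp))
    · rw [if_neg ht]
      simp only [List.length_cons, List.getD_cons_succ]
      exact ih (List.pairwise_cons.mp hl).2



lemma lemP {l : List ℝ} (hl : l.Pairwise (· ≤ ·)) (j : ℕ) (t v : ℝ) :
    min t ((oi v l).getD j 0) ≤ (oi t l).getD j 0 ∧
      (oi t l).getD j 0 ≤ max t ((oi v l).getD j 0) := by
  rcases le_total t v with htv | hvt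
  · refine ⟨?_, le_max_of_le_right (lemM hl htv j)⟩
    by_cases hti : t ≤ (oi t l).getD j 0
    · exact min_le_of_left_le hti
    · have h1 : (oi t l).getD j 0 < t := not_le.mp hti
      have hE := lemE hl j h1
      rcases lt_trichotomy j l.length with hj | hj | hj
      · have h2 := lemE' hl j (hE ▸ (h1.trans_le htv)) hj
        exact min_le_of_right_le (by rw [h2, ← hE])
      · exact absurd (hj ▸ lemG hl t) (not_le.mpr h1)
      · have hIt : (oi t l).getD j 0 = 0 :=
          List.getD_eq_default _ _ (by rw [List.orderedInsert_length]; omega)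
        have hIv : (oi v l).getD j 0 = 0 :=
          List.getD_eq_default _ _ (by rw [List.orderedInsert_length]; omega)
        exact min_le_of_right_le (le_of_eq (hIv.trans hIt.symm))
  · refine ⟨min_le_of_right_le (lemM hl hvt j), ?_⟩
    by_cases hti : (oi t l).getD j 0 ≤ t
    · exact le_max_of_le_left hti
    · have h1 : t < (oi t l).getD j 0 := not_le.mp hti
      have hF := lemF hl j h1
      match j with
      | 0 => exact absurd h1 (not_lt.mpr (lemH t l))
      | (j+1) =>
        simp only [Nat.add_sub_cancel] at hF
        rcases lt_or_ge j l.length with hj | hj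
        · have h2 := lemF' hl j (le_of_lt (hF ▸ (hvt.trans_lt h1))) hj
          exact le_max_of_le_right (by rw [h2, ← hF])
        · have hIt : (oi t l).getD (j+1) 0 = 0 :=
            List.getD_eq_default _ _ (by rw [List.orderedInsert_length]; omega)
          have hIv : (oi v l).getD (j+1) 0 = 0 :=
            List.getD_eq_default _ _ (by rw [List.orderedInsert_length]; omega)
          exact le_max_of_le_right (le_of_eq (hIt.trans hIv.symm))

lemma between_abs {t A B : ℝ} (h1 : min t B ≤ A) (h2 : A ≤ max t B) :
    |t - A| ≤ |t - B| := by
  rcases le_total t B with h | h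
  · rw [min_eq_left h] at h1
    rw [max_eq_right h] at h2
    rw [abs_of_nonpos (by linarith), abs_of_nonpos (by linarith)]
    linarith
  · rw [min_eq_right h] at h1
    rw [max_eq_left h] at h2
    rw [abs_of_nonneg (by linarith), abs_of_nonneg (by linarith)]
    linarith

lemma comp_sp {f g : ℝ → ℝ} (hf : Monotone f) (hg : Monotone g)
    (hfP : ∀ t v, min t (f v) ≤ f t ∧ f t ≤ max t (f v))
    (hgP : ∀ t v, min t (g v) ≤ g t ∧ g t ≤ max t (g v)) (t v : ℝ) :
    |t - g (f t)| ≤ |t - g (f v)| := by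
  obtain ⟨h1, h2⟩ := hfP t v
  obtain ⟨h3, h4⟩ := hgP (f t) (f v)
  apply between_abs
  · rcases le_total (f v) t with h | h
    · have hu : f v ≤ f t := by rwa [min_eq_right h] at h1
      exact min_le_of_right_le (hg hu)
    · rcases min_le_iff.mp h3 with h5 | h5
      · have ht : t ≤ f t := by rwa [min_eq_left h] at h1
        exact min_le_of_left_le (ht.trans h5)
      · exact min_le_of_right_le h5
  · rcases le_total (f v) t with h | h
    · rcases le_max_iff.mp h4 with h5 | h5
      · have ht : f t ≤ t := by rwa [max_eq_left h] at h2
        exact le_max_of_le_left (h5.trans ht)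
      · exact le_max_of_le_right h5
    · have hu : f t ≤ f v := by rwa [max_eq_right h] at h2
      exact le_max_of_le_right (hg hu)

lemma ins_mono (S : Multiset ℝ) (j : ℕ) : Monotone (fun v => nthSmallest (v ::ₘ S) j) := by
  intro a b hab
  simp only [nthSmallest, sortcons]
  exact lemM (Multiset.pairwise_sort _ _) hab j

lemma ins_P (S : Multiset ℝ) (j : ℕ) (t v : ℝ) :
    min t (nthSmallest (v ::ₘ S) j) ≤ nthSmallest (t ::ₘ S) j ∧
      nthSmallest (t ::ₘ S) j ≤ max t (nthSmallest (v ::ₘ S) j) := by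
  simp only [nthSmallest, sortcons]
  exact lemP (Multiset.pairwise_sort _ _) j t v

lemma hrow {n : ℕ} (e : Fin n) (y : Fin n → ℝ) :
    (Finset.univ.val.map y) = y e ::ₘ ((Finset.univ.erase e).val.map y) := by
  rw [Finset.erase_val, ← Multiset.map_cons,
    Multiset.cons_erase (Finset.mem_val.mpr (Finset.mem_univ e))]

theorem stmt_10 (k lam p q : ℕ) (hp : 1 ≤ p) (hpk : p ≤ k) (hq : 1 ≤ q) (hql : q ≤ lam)
    (x : Fin k → Fin lam → ℝ) (d : Fin k) (i : Fin lam) (x' : ℝ) :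
    |x d i - statMech k lam p q x|
      ≤ |x d i - statMech k lam p q
          (fun d' i' => if d' = d ∧ i' = i then x' else x d' i')| := by
  classical
  set S : Multiset ℝ := ((Finset.univ.erase i).val.map (x d)) with hS
  set T : Multiset ℝ := ((Finset.univ.erase d).val.map
      (fun d' => nthSmallest (Finset.univ.val.map (x d')) (q - 1))) with hT
  set f : ℝ → ℝ := fun v => nthSmallest (v ::ₘ S) (q - 1) with hf
  set g : ℝ → ℝ := fun r => nthSmallest (r ::ₘ T) (p - 1) with hg
  have e1 : statMech k lam p q x = g (f (x d i)) := by
    rw [statMech, hrow d, hrow i (x d)]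
  have e2 : statMech k lam p q
      (fun d' i' => if d' = d ∧ i' = i then x' else x d' i') = g (f x') := by
    rw [statMech, hrow d]
    have hhead : (Finset.univ.val.map fun i' => if d = d ∧ i' = i then x' else x d i')
        = x' ::ₘ S := by
      rw [hrow i]
      congr 1
      · simp
      · rw [hS]
        refine Multiset.map_congr rfl fun i' hi' => ?_
        have : i' ≠ i := (Finset.mem_erase.mp (Finset.mem_val.mp hi')).1
        simp [this]
    have htail : ((Finset.univ.erase d).val.map
        (fun d' => nthSmallest (Finset.univ.val.map
          fun i' => if d' = d ∧ i' = i then x' else x d' i') (q - 1))) = T := by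
      rw [hT]
      refine Multiset.map_congr rfl fun d' hd' => ?_
      have hne : d' ≠ d := (Finset.mem_erase.mp (Finset.mem_val.mp hd')).1
      congr 1
      refine Multiset.map_congr rfl fun i' _ => ?_
      simp [hne]
    rw [hhead, htail]
  rw [e1, e2]
  exact comp_sp (ins_mono S _) (ins_mono T _)
    (fun a b => ins_P S _ a b) (fun a b => ins_P T _ a b) (x d i) x'
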